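/- With Ω = [[Ω₁, Γ],[Γ†, Ω₂]] on H = H₁ ⊕ H₂, define H₂c = O_Ω(H₁) ⊖ H₁ and H₁c = O_Ω(H₂) ⊖ H₂. Then H₁c ⊕ H₂c = O_Ω(H₁c) = O_Ω(H₂c) = O_Ω(Ran Γ ⊕ Ran Γ†). -/

import Mathlib

open ContinuousLinearMap MeasureTheory

/-- The orbit of a set `S` under an operator `Ω`: the smallest closed `Ω`-invariant
subspace containing `S`. -/
noncomputable def orbit {H : Type*} [NormedAddCommGroup H] [InnerProductSpace ℂ H]
    (Ω : H →L[ℂ] H) (S : Set H) : Submodule ℂ H :=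
  sInf {K : Submodule ℂ H | S ⊆ K ∧ IsClosed (K : Set H) ∧ ∀ x ∈ K, Ω x ∈ K}

variable {H₁ H₂ : Type*} [NormedAddCommGroup H₁] [InnerProductSpace ℂ H₁] [CompleteSpace H₁]
  [NormedAddCommGroup H₂] [InnerProductSpace ℂ H₂] [CompleteSpace H₂]

/-- Inclusion of `H₁` into the Hilbert space direct sum `H₁ ⊕ H₂`. -/
noncomputable def inl' : H₁ →L[ℂ] WithLp 2 (H₁ × H₂) :=
  (WithLp.prodContinuousLinearEquiv 2 ℂ H₁ H₂).symm.toContinuousLinearMap ∘L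
    ContinuousLinearMap.inl ℂ H₁ H₂

/-- Inclusion of `H₂` into the Hilbert space direct sum `H₁ ⊕ H₂`. -/
noncomputable def inr' : H₂ →L[ℂ] WithLp 2 (H₁ × H₂) :=
  (WithLp.prodContinuousLinearEquiv 2 ℂ H₁ H₂).symm.toContinuousLinearMap ∘L
    ContinuousLinearMap.inr ℂ H₁ H₂

/-- The block operator `[[Ω₁, Γ], [Γ†, Ω₂]]` on `H₁ ⊕ H₂`. -/
noncomputable def blockOp (Ω₁ : H₁ →L[ℂ] H₁) (Ω₂ : H₂ →L[ℂ] H₂) (Γ : H₂ →L[ℂ] H₁) :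
    WithLp 2 (H₁ × H₂) →L[ℂ] WithLp 2 (H₁ × H₂) :=
  (WithLp.prodContinuousLinearEquiv 2 ℂ H₁ H₂).symm.toContinuousLinearMap ∘L
    ((Ω₁ ∘L ContinuousLinearMap.fst ℂ H₁ H₂ + Γ ∘L ContinuousLinearMap.snd ℂ H₁ H₂).prod
      ((ContinuousLinearMap.adjoint Γ) ∘L ContinuousLinearMap.fst ℂ H₁ H₂ +
        Ω₂ ∘L ContinuousLinearMap.snd ℂ H₁ H₂)) ∘L
    (WithLp.prodContinuousLinearEquiv 2 ℂ H₁ H₂).toContinuousLinearMap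

/-- `H₁` as a subspace of `H₁ ⊕ H₂`. -/
noncomputable def sub1 : Submodule ℂ (WithLp 2 (H₁ × H₂)) := LinearMap.range ((inl' : H₁ →L[ℂ] WithLp 2 (H₁ × H₂)) : H₁ →ₗ[ℂ] WithLp 2 (H₁ × H₂))

/-- `H₂` as a subspace of `H₁ ⊕ H₂`. -/
noncomputable def sub2 : Submodule ℂ (WithLp 2 (H₁ × H₂)) := LinearMap.range ((inr' : H₂ →L[ℂ] WithLp 2 (H₁ × H₂)) : H₂ →ₗ[ℂ] WithLp 2 (H₁ × H₂))

/-! ### Auxiliary lemmas -/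

section OrbitLemmas
variable {H : Type*} [NormedAddCommGroup H] [InnerProductSpace ℂ H]
  {Ω : H →L[ℂ] H} {S : Set H} {K : Submodule ℂ H}

lemma orbit_le (hS : S ⊆ K) (hc : IsClosed (K : Set H)) (hinv : ∀ x ∈ K, Ω x ∈ K) :
    orbit Ω S ≤ K := sInf_le ⟨hS, hc, hinv⟩

lemma subset_orbit : S ⊆ (orbit Ω S : Set H) := fun _ hx =>
  Submodule.mem_sInf.2 fun _ hK => hK.1 hx

lemma orbit_isClosed : IsClosed ((orbit Ω S : Submodule ℂ H) : Set H) := by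
  rw [orbit, Submodule.coe_sInf]
  exact isClosed_biInter fun K hK => hK.2.1

lemma orbit_mapsTo {x : H} (hx : x ∈ orbit Ω S) : Ω x ∈ orbit Ω S :=
  Submodule.mem_sInf.2 fun K hK => hK.2.2 x (Submodule.mem_sInf.1 hx K hK)

end OrbitLemmas

/-- First coordinate projection. -/
noncomputable def fst' : WithLp 2 (H₁ × H₂) →L[ℂ] H₁ :=
  ContinuousLinearMap.fst ℂ H₁ H₂ ∘L
    (WithLp.prodContinuousLinearEquiv 2 ℂ H₁ H₂).toContinuousLinearMap

/-- Second coordinate projection. -/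
noncomputable def snd' : WithLp 2 (H₁ × H₂) →L[ℂ] H₂ :=
  ContinuousLinearMap.snd ℂ H₁ H₂ ∘L
    (WithLp.prodContinuousLinearEquiv 2 ℂ H₁ H₂).toContinuousLinearMap

lemma fst'_inl' (a : H₁) : fst' (inl' a : WithLp 2 (H₁ × H₂)) = a := rfl
lemma snd'_inl' (a : H₁) : snd' (inl' a : WithLp 2 (H₁ × H₂)) = 0 := rfl
lemma fst'_inr' (b : H₂) : fst' (inr' b : WithLp 2 (H₁ × H₂)) = 0 := rfl
lemma snd'_inr' (b : H₂) : snd' (inr' b : WithLp 2 (H₁ × H₂)) = b := rfl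

lemma decomp' (z : WithLp 2 (H₁ × H₂)) : inl' (fst' z) + inr' (snd' z) = z := by
  apply (WithLp.prodContinuousLinearEquiv 2 ℂ H₁ H₂).injective
  simp [fst', snd', inl', inr']
  rfl

lemma fst'_mk (a : H₁) (b : H₂) : fst' (inl' a + inr' b : WithLp 2 (H₁ × H₂)) = a := by
  rw [map_add, fst'_inl', fst'_inr', add_zero]

lemma snd'_mk (a : H₁) (b : H₂) : snd' (inl' a + inr' b : WithLp 2 (H₁ × H₂)) = b := by
  rw [map_add, snd'_inl', snd'_inr', zero_add]

lemma blockOp_apply (Ω₁ : H₁ →L[ℂ] H₁) (Ω₂ : H₂ →L[ℂ] H₂) (Γ : H₂ →L[ℂ] H₁)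
    (z : WithLp 2 (H₁ × H₂)) :
    blockOp Ω₁ Ω₂ Γ z = inl' (Ω₁ (fst' z) + Γ (snd' z)) +
      inr' ((ContinuousLinearMap.adjoint Γ) (fst' z) + Ω₂ (snd' z)) := by
  apply (WithLp.prodContinuousLinearEquiv 2 ℂ H₁ H₂).injective
  simp [blockOp, fst', snd', inl', inr']

lemma blockOp_inl (Ω₁ : H₁ →L[ℂ] H₁) (Ω₂ : H₂ →L[ℂ] H₂) (Γ : H₂ →L[ℂ] H₁) (x : H₁) :
    blockOp Ω₁ Ω₂ Γ (inl' x) = inl' (Ω₁ x) + inr' ((ContinuousLinearMap.adjoint Γ) x) := by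
  rw [blockOp_apply, fst'_inl', snd'_inl', map_zero, map_zero, add_zero, add_zero]

lemma blockOp_inr (Ω₁ : H₁ →L[ℂ] H₁) (Ω₂ : H₂ →L[ℂ] H₂) (Γ : H₂ →L[ℂ] H₁) (y : H₂) :
    blockOp Ω₁ Ω₂ Γ (inr' y) = inl' (Γ y) + inr' (Ω₂ y) := by
  rw [blockOp_apply, fst'_inr', snd'_inr', map_zero, map_zero, zero_add, zero_add]

/-- The "product" subspace `A ⊕ B` inside `H₁ ⊕ H₂`. -/
noncomputable def pS (A : Submodule ℂ H₁) (B : Submodule ℂ H₂) :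
    Submodule ℂ (WithLp 2 (H₁ × H₂)) :=
  A.comap (fst' : WithLp 2 (H₁ × H₂) →L[ℂ] H₁).toLinearMap ⊓
    B.comap (snd' : WithLp 2 (H₁ × H₂) →L[ℂ] H₂).toLinearMap

lemma mem_pS {A : Submodule ℂ H₁} {B : Submodule ℂ H₂} {z : WithLp 2 (H₁ × H₂)} :
    z ∈ pS A B ↔ fst' z ∈ A ∧ snd' z ∈ B := Iff.rfl

lemma pS_isClosed {A : Submodule ℂ H₁} {B : Submodule ℂ H₂} (hA : IsClosed (A : Set H₁))
    (hB : IsClosed (B : Set H₂)) :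
    IsClosed ((pS A B : Submodule ℂ (WithLp 2 (H₁ × H₂))) : Set (WithLp 2 (H₁ × H₂))) := by
  have : ((pS A B : Submodule ℂ (WithLp 2 (H₁ × H₂))) : Set (WithLp 2 (H₁ × H₂))) =
      fst' ⁻¹' (A : Set H₁) ∩ snd' ⁻¹' (B : Set H₂) := rfl
  rw [this]
  exact (hA.preimage fst'.continuous).inter (hB.preimage snd'.continuous)

lemma inner_inl' (x : H₁) (z : WithLp 2 (H₁ × H₂)) :
    inner ℂ (inl' x) z = inner ℂ x (fst' z) := by
  rw [WithLp.prod_inner_apply]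
  have h1 : (WithLp.ofLp (inl' x : WithLp 2 (H₁ × H₂))).fst = x := rfl
  have h2 : (WithLp.ofLp (inl' x : WithLp 2 (H₁ × H₂))).snd = (0 : H₂) := rfl
  rw [h1, h2, inner_zero_left, add_zero]; rfl

lemma inner_inr' (y : H₂) (z : WithLp 2 (H₁ × H₂)) :
    inner ℂ (inr' y) z = inner ℂ y (snd' z) := by
  rw [WithLp.prod_inner_apply]
  have h1 : (WithLp.ofLp (inr' y : WithLp 2 (H₁ × H₂))).fst = (0 : H₁) := rfl
  have h2 : (WithLp.ofLp (inr' y : WithLp 2 (H₁ × H₂))).snd = y := rfl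
  rw [h1, h2, inner_zero_left, zero_add]; rfl

lemma mem_sub1 {z : WithLp 2 (H₁ × H₂)} :
    z ∈ (sub1 : Submodule ℂ (WithLp 2 (H₁ × H₂))) ↔ snd' z = 0 := by
  constructor
  · intro hz; obtain ⟨x, rfl⟩ := LinearMap.mem_range.1 hz; rfl
  · intro h
    refine LinearMap.mem_range.2 ⟨fst' z, ?_⟩
    apply (WithLp.prodContinuousLinearEquiv 2 ℂ H₁ H₂).injective
    have : (WithLp.prodContinuousLinearEquiv 2 ℂ H₁ H₂) z = (fst' z, snd' z) := rfl
    simp [inl', this, h]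

lemma mem_sub2 {z : WithLp 2 (H₁ × H₂)} :
    z ∈ (sub2 : Submodule ℂ (WithLp 2 (H₁ × H₂))) ↔ fst' z = 0 := by
  constructor
  · intro hz; obtain ⟨x, rfl⟩ := LinearMap.mem_range.1 hz; rfl
  · intro h
    refine LinearMap.mem_range.2 ⟨snd' z, ?_⟩
    apply (WithLp.prodContinuousLinearEquiv 2 ℂ H₁ H₂).injective
    have : (WithLp.prodContinuousLinearEquiv 2 ℂ H₁ H₂) z = (fst' z, snd' z) := rfl
    simp [inr', this, h]

lemma mem_sub1_orth {z : WithLp 2 (H₁ × H₂)} :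
    z ∈ (sub1 : Submodule ℂ (WithLp 2 (H₁ × H₂)))ᗮ ↔ fst' z = 0 := by
  rw [Submodule.mem_orthogonal]
  constructor
  · intro h
    have := h (inl' (fst' z)) (LinearMap.mem_range.2 ⟨fst' z, rfl⟩)
    rw [inner_inl'] at this
    exact inner_self_eq_zero.1 this
  · rintro h w hw; obtain ⟨x, rfl⟩ := LinearMap.mem_range.1 hw
    rw [ContinuousLinearMap.coe_coe, inner_inl', h, inner_zero_right]

lemma mem_sub2_orth {z : WithLp 2 (H₁ × H₂)} :
    z ∈ (sub2 : Submodule ℂ (WithLp 2 (H₁ × H₂)))ᗮ ↔ snd' z = 0 := by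
  rw [Submodule.mem_orthogonal]
  constructor
  · intro h
    have := h (inr' (snd' z)) (LinearMap.mem_range.2 ⟨snd' z, rfl⟩)
    rw [inner_inr'] at this
    exact inner_self_eq_zero.1 this
  · rintro h w hw; obtain ⟨y, rfl⟩ := LinearMap.mem_range.1 hw
    rw [ContinuousLinearMap.coe_coe, inner_inr', h, inner_zero_right]

section Key
variable (Ω₁ : H₁ →L[ℂ] H₁) (Ω₂ : H₂ →L[ℂ] H₂) (Γ : H₂ →L[ℂ] H₁)

/-- If a closed invariant subspace contains `inl' K₁`, it contains `inr' K₂`. -/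
lemma key₂ (N : Submodule ℂ (WithLp 2 (H₁ × H₂)))
    (hNc : IsClosed (N : Set (WithLp 2 (H₁ × H₂))))
    (hNinv : ∀ z ∈ N, blockOp Ω₁ Ω₂ Γ z ∈ N)
    (h1 : ∀ a ∈ orbit Ω₁ (Set.range Γ), inl' a ∈ N) :
    ∀ b ∈ orbit Ω₂ (Set.range (ContinuousLinearMap.adjoint Γ)), inr' b ∈ N := by
  have hle : orbit Ω₂ (Set.range (ContinuousLinearMap.adjoint Γ)) ≤
      N.comap (inr' : H₂ →L[ℂ] WithLp 2 (H₁ × H₂)).toLinearMap := by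
    apply orbit_le
    · rintro _ ⟨x, rfl⟩
      haveI : CompleteSpace (orbit Ω₁ (Set.range Γ)) :=
        (orbit_isClosed (Ω := Ω₁) (S := Set.range Γ)).completeSpace_coe
      obtain ⟨u, hu, v, hv, rfl⟩ := (orbit Ω₁ (Set.range Γ)).exists_add_mem_mem_orthogonal x
      have hv0 : ContinuousLinearMap.adjoint Γ v = 0 := by
        have hz : ∀ y : H₂, inner ℂ (Γ y) v = 0 := fun y =>
          (Submodule.mem_orthogonal _ v).1 hv (Γ y) (subset_orbit ⟨y, rfl⟩)
        have h0 : inner ℂ (ContinuousLinearMap.adjoint Γ v) (ContinuousLinearMap.adjoint Γ v)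
            = 0 := by
          rw [ContinuousLinearMap.adjoint_inner_right]
          exact hz _
        exact inner_self_eq_zero.1 h0
      rw [map_add, hv0, add_zero]
      have heq : inr' (ContinuousLinearMap.adjoint Γ u) =
          blockOp Ω₁ Ω₂ Γ (inl' u) - inl' (Ω₁ u) := by
        rw [blockOp_inl]; abel
      show inr' (ContinuousLinearMap.adjoint Γ u) ∈ N
      rw [heq]
      exact N.sub_mem (hNinv _ (h1 u hu)) (h1 _ (orbit_mapsTo hu))
    · exact hNc.preimage inr'.continuous
    · intro b hb
      have heq : inr' (Ω₂ b) = blockOp Ω₁ Ω₂ Γ (inr' b) - inl' (Γ b) := by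
        rw [blockOp_inr]; abel
      show inr' (Ω₂ b) ∈ N
      rw [heq]
      exact N.sub_mem (hNinv _ hb) (h1 _ (subset_orbit ⟨b, rfl⟩))
  exact fun b hb => hle hb

/-- If a closed invariant subspace contains `inr' K₂`, it contains `inl' K₁`. -/
lemma key₁ (N : Submodule ℂ (WithLp 2 (H₁ × H₂)))
    (hNc : IsClosed (N : Set (WithLp 2 (H₁ × H₂))))
    (hNinv : ∀ z ∈ N, blockOp Ω₁ Ω₂ Γ z ∈ N)
    (h2 : ∀ b ∈ orbit Ω₂ (Set.range (ContinuousLinearMap.adjoint Γ)), inr' b ∈ N) :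
    ∀ a ∈ orbit Ω₁ (Set.range Γ), inl' a ∈ N := by
  have hle : orbit Ω₁ (Set.range Γ) ≤
      N.comap (inl' : H₁ →L[ℂ] WithLp 2 (H₁ × H₂)).toLinearMap := by
    apply orbit_le
    · rintro _ ⟨y, rfl⟩
      haveI : CompleteSpace (orbit Ω₂ (Set.range (ContinuousLinearMap.adjoint Γ))) :=
        (orbit_isClosed (Ω := Ω₂) (S := Set.range (ContinuousLinearMap.adjoint Γ))).completeSpace_coe
      obtain ⟨u, hu, v, hv, rfl⟩ :=
        (orbit Ω₂ (Set.range (ContinuousLinearMap.adjoint Γ))).exists_add_mem_mem_orthogonal y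
      have hv0 : Γ v = 0 := by
        have hz : ∀ x : H₁, inner ℂ (ContinuousLinearMap.adjoint Γ x) v = 0 := fun x =>
          (Submodule.mem_orthogonal _ v).1 hv _ (subset_orbit ⟨x, rfl⟩)
        have h0 : inner ℂ (Γ v) (Γ v) = 0 := by
          rw [← ContinuousLinearMap.adjoint_inner_left]
          exact hz _
        exact inner_self_eq_zero.1 h0
      rw [map_add, hv0, add_zero]
      have heq : inl' (Γ u) = blockOp Ω₁ Ω₂ Γ (inr' u) - inr' (Ω₂ u) := by
        rw [blockOp_inr]; abel
      show inl' (Γ u) ∈ N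
      rw [heq]
      exact N.sub_mem (hNinv _ (h2 u hu)) (h2 _ (orbit_mapsTo hu))
    · exact hNc.preimage inl'.continuous
    · intro a ha
      have heq : inl' (Ω₁ a) = blockOp Ω₁ Ω₂ Γ (inl' a) -
          inr' (ContinuousLinearMap.adjoint Γ a) := by
        rw [blockOp_inl]; abel
      show inl' (Ω₁ a) ∈ N
      rw [heq]
      exact N.sub_mem (hNinv _ ha) (h2 _ (subset_orbit ⟨a, rfl⟩))
  exact fun a ha => hle ha

end Key

/-- system reconstruction, part one: with `H₂c = O_Ω(H₁) ⊖ H₁` and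
`H₁c = O_Ω(H₂) ⊖ H₂`, one has
`H₁c ⊕ H₂c = O_Ω(H₁c) = O_Ω(H₂c) = O_Ω(Ran Γ ⊕ Ran Γ†)`. -/
theorem system_reconstruction
    (Ω₁ : H₁ →L[ℂ] H₁) (Ω₂ : H₂ →L[ℂ] H₂) (Γ : H₂ →L[ℂ] H₁)
    (hΩ₁ : IsSelfAdjoint Ω₁) (hΩ₂ : IsSelfAdjoint Ω₂)
    (Ω : WithLp 2 (H₁ × H₂) →L[ℂ] WithLp 2 (H₁ × H₂)) (hΩ : Ω = blockOp Ω₁ Ω₂ Γ)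
    (H2c H1c : Submodule ℂ (WithLp 2 (H₁ × H₂)))
    (hH2c : H2c = orbit Ω (sub1 : Submodule ℂ (WithLp 2 (H₁ × H₂))) ⊓
      (sub1 : Submodule ℂ (WithLp 2 (H₁ × H₂)))ᗮ)
    (hH1c : H1c = orbit Ω (sub2 : Submodule ℂ (WithLp 2 (H₁ × H₂))) ⊓
      (sub2 : Submodule ℂ (WithLp 2 (H₁ × H₂)))ᗮ) :
    H1c ⊔ H2c = orbit Ω (H1c : Set (WithLp 2 (H₁ × H₂))) ∧
    H1c ⊔ H2c = orbit Ω (H2c : Set (WithLp 2 (H₁ × H₂))) ∧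
    H1c ⊔ H2c = orbit Ω
      (inl' '' Set.range Γ ∪ inr' '' Set.range (ContinuousLinearMap.adjoint Γ)) := by
  subst hΩ
  set Γd := ContinuousLinearMap.adjoint Γ with hΓd
  set K₁ : Submodule ℂ H₁ := orbit Ω₁ (Set.range Γ) with hK₁
  set K₂ : Submodule ℂ H₂ := orbit Ω₂ (Set.range Γd) with hK₂
  set M : Submodule ℂ (WithLp 2 (H₁ × H₂)) := pS K₁ K₂ with hM
  have hMc : IsClosed (M : Set (WithLp 2 (H₁ × H₂))) := pS_isClosed orbit_isClosed orbit_isClosed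
  have hMinv : ∀ z ∈ M, blockOp Ω₁ Ω₂ Γ z ∈ M := by
    intro z hz
    obtain ⟨h1, h2⟩ := mem_pS.1 hz
    rw [blockOp_apply]
    refine mem_pS.2 ⟨?_, ?_⟩
    · rw [fst'_mk]
      exact K₁.add_mem (orbit_mapsTo h1) (subset_orbit ⟨snd' z, rfl⟩)
    · rw [snd'_mk]
      exact K₂.add_mem (subset_orbit ⟨fst' z, rfl⟩) (orbit_mapsTo h2)
  -- the orbit of H₁ is H₁ ⊕ K₂
  have horb1 : orbit (blockOp Ω₁ Ω₂ Γ) ((sub1 : Submodule ℂ (WithLp 2 (H₁ × H₂))) : Set _)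
      = pS ⊤ K₂ := by
    apply le_antisymm
    · apply orbit_le
      · intro z hz
        exact mem_pS.2 ⟨trivial, by rw [mem_sub1.1 hz]; exact K₂.zero_mem⟩
      · exact pS_isClosed (by rw [Submodule.top_coe]; exact isClosed_univ) orbit_isClosed
      · intro z hz
        obtain ⟨-, h2⟩ := mem_pS.1 hz
        rw [blockOp_apply]
        refine mem_pS.2 ⟨trivial, ?_⟩
        rw [snd'_mk]
        exact K₂.add_mem (subset_orbit ⟨fst' z, rfl⟩) (orbit_mapsTo h2)
    · intro z hz
      obtain ⟨-, h2⟩ := mem_pS.1 hz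
      rw [← decomp' z]
      refine Submodule.add_mem _ (subset_orbit (LinearMap.mem_range.2 ⟨fst' z, rfl⟩)) ?_
      exact key₂ Ω₁ Ω₂ Γ _ orbit_isClosed (fun w hw => orbit_mapsTo hw)
        (fun a _ => subset_orbit (show inl' a ∈ (sub1 : Submodule ℂ (WithLp 2 (H₁ × H₂))) from LinearMap.mem_range.2 ⟨a, rfl⟩)) _ h2
  have horb2 : orbit (blockOp Ω₁ Ω₂ Γ) ((sub2 : Submodule ℂ (WithLp 2 (H₁ × H₂))) : Set _)
      = pS K₁ ⊤ := by
    apply le_antisymm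
    · apply orbit_le
      · intro z hz
        exact mem_pS.2 ⟨by rw [mem_sub2.1 hz]; exact K₁.zero_mem, trivial⟩
      · exact pS_isClosed orbit_isClosed (by rw [Submodule.top_coe]; exact isClosed_univ)
      · intro z hz
        obtain ⟨h1, -⟩ := mem_pS.1 hz
        rw [blockOp_apply]
        refine mem_pS.2 ⟨?_, trivial⟩
        rw [fst'_mk]
        exact K₁.add_mem (orbit_mapsTo h1) (subset_orbit ⟨snd' z, rfl⟩)
    · intro z hz
      obtain ⟨h1, -⟩ := mem_pS.1 hz
      rw [← decomp' z]
      refine Submodule.add_mem _ ?_ (subset_orbit (LinearMap.mem_range.2 ⟨snd' z, rfl⟩))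
      exact key₁ Ω₁ Ω₂ Γ _ orbit_isClosed (fun w hw => orbit_mapsTo hw)
        (fun b _ => subset_orbit (show inr' b ∈ (sub2 : Submodule ℂ (WithLp 2 (H₁ × H₂))) from LinearMap.mem_range.2 ⟨b, rfl⟩)) _ h1
  have hH2c' : H2c = pS ⊥ K₂ := by
    rw [hH2c]
    ext z
    simp only [Submodule.mem_inf, horb1, mem_pS, mem_sub1_orth, Submodule.mem_top,
      Submodule.mem_bot, true_and]
    tauto
  have hH1c' : H1c = pS K₁ ⊥ := by
    rw [hH1c]
    ext z
    simp only [Submodule.mem_inf, horb2, mem_pS, mem_sub2_orth, Submodule.mem_top,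
      Submodule.mem_bot, and_true]
  have hin1c : ∀ a ∈ K₁, inl' a ∈ H1c := by
    intro a ha
    rw [hH1c']
    exact mem_pS.2 ⟨by rw [fst'_inl']; exact ha, by rw [snd'_inl']; exact Submodule.zero_mem _⟩
  have hin2c : ∀ b ∈ K₂, inr' b ∈ H2c := by
    intro b hb
    rw [hH2c']
    exact mem_pS.2 ⟨by rw [fst'_inr']; exact Submodule.zero_mem _, by rw [snd'_inr']; exact hb⟩
  have hsup : H1c ⊔ H2c = M := by
    apply le_antisymm
    · apply sup_le
      · rw [hH1c']
        intro z hz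
        obtain ⟨h1, h2⟩ := mem_pS.1 hz
        exact mem_pS.2 ⟨h1, by rw [(Submodule.mem_bot ℂ).1 h2]; exact K₂.zero_mem⟩
      · rw [hH2c']
        intro z hz
        obtain ⟨h1, h2⟩ := mem_pS.1 hz
        exact mem_pS.2 ⟨by rw [(Submodule.mem_bot ℂ).1 h1]; exact K₁.zero_mem, h2⟩
    · intro z hz
      obtain ⟨h1, h2⟩ := mem_pS.1 hz
      rw [← decomp' z]
      exact Submodule.add_mem _ (Submodule.mem_sup_left (hin1c _ h1))
        (Submodule.mem_sup_right (hin2c _ h2))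
  rw [hsup]
  have hH1cM : H1c ≤ M := le_sup_left.trans hsup.le
  have hH2cM : H2c ≤ M := le_sup_right.trans hsup.le
  refine ⟨?_, ?_, ?_⟩
  · -- M = orbit (H1c)
    have hin1 : ∀ a ∈ K₁, inl' a ∈ orbit (blockOp Ω₁ Ω₂ Γ) (H1c : Set (WithLp 2 (H₁ × H₂))) :=
      fun a ha => subset_orbit (hin1c a ha)
    have hin2 := key₂ Ω₁ Ω₂ Γ _ orbit_isClosed (fun w hw => orbit_mapsTo hw) hin1
    apply le_antisymm
    · intro z hz
      obtain ⟨h1, h2⟩ := mem_pS.1 hz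
      rw [← decomp' z]
      exact Submodule.add_mem _ (hin1 _ h1) (hin2 _ h2)
    · exact orbit_le (fun z hz => hH1cM hz) hMc hMinv
  · -- M = orbit (H2c)
    have hin2 : ∀ b ∈ K₂, inr' b ∈ orbit (blockOp Ω₁ Ω₂ Γ) (H2c : Set (WithLp 2 (H₁ × H₂))) :=
      fun b hb => subset_orbit (hin2c b hb)
    have hin1 := key₁ Ω₁ Ω₂ Γ _ orbit_isClosed (fun w hw => orbit_mapsTo hw) hin2
    apply le_antisymm
    · intro z hz
      obtain ⟨h1, h2⟩ := mem_pS.1 hz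
      rw [← decomp' z]
      exact Submodule.add_mem _ (hin1 _ h1) (hin2 _ h2)
    · exact orbit_le (fun z hz => hH2cM hz) hMc hMinv
  · -- M = orbit (Ran Γ ⊕ Ran Γ†)
    set S₃ : Set (WithLp 2 (H₁ × H₂)) := inl' '' Set.range Γ ∪ inr' '' Set.range Γd with hS₃
    have hS₃M : S₃ ⊆ (M : Set (WithLp 2 (H₁ × H₂))) := by
      rintro z (⟨w, ⟨y, rfl⟩, rfl⟩ | ⟨w, ⟨x, rfl⟩, rfl⟩)
      · exact mem_pS.2 ⟨by rw [fst'_inl']; exact subset_orbit ⟨y, rfl⟩,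
          by rw [snd'_inl']; exact Submodule.zero_mem _⟩
      · exact mem_pS.2 ⟨by rw [fst'_inr']; exact Submodule.zero_mem _,
          by rw [snd'_inr']; exact subset_orbit ⟨x, rfl⟩⟩
    have hin1 : ∀ a ∈ K₁, inl' a ∈ orbit (blockOp Ω₁ Ω₂ Γ) S₃ := by
      have hle : K₁ ≤ (orbit (blockOp Ω₁ Ω₂ Γ) S₃).comap
          (inl' : H₁ →L[ℂ] WithLp 2 (H₁ × H₂)).toLinearMap := by
        apply orbit_le
        · rintro _ ⟨y, rfl⟩
          exact subset_orbit (Or.inl ⟨Γ y, ⟨y, rfl⟩, rfl⟩)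
        · exact IsClosed.preimage inl'.continuous
            (orbit_isClosed (Ω := blockOp Ω₁ Ω₂ Γ) (S := S₃))
        · intro a ha
          have heq : inl' (Ω₁ a) = blockOp Ω₁ Ω₂ Γ (inl' a) - inr' (Γd a) := by
            rw [blockOp_inl]; abel
          show inl' (Ω₁ a) ∈ orbit (blockOp Ω₁ Ω₂ Γ) S₃
          rw [heq]
          exact Submodule.sub_mem _ (orbit_mapsTo ha)
            (subset_orbit (Or.inr ⟨Γd a, ⟨a, rfl⟩, rfl⟩))
      exact fun a ha => hle ha
    have hin2 := key₂ Ω₁ Ω₂ Γ _ orbit_isClosed (fun w hw => orbit_mapsTo hw) hin1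
    apply le_antisymm
    · intro z hz
      obtain ⟨h1, h2⟩ := mem_pS.1 hz
      rw [← decomp' z]
      exact Submodule.add_mem _ (hin1 _ h1) (hin2 _ h2)
    · exact orbit_le hS₃M hMc hMinv
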